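/- (Theorem 1) Let {K_n} be a finite family of incoherent 2×2 complex matrices with ∑_n K_n† K_n = I, and let z, r be real numbers with z² + r² ≤ 1. Then there exists a finite family {K'_m} of strictly incoherent 2×2 complex matrices with ∑_m K'_m† K'_m = I such that ∑_m K'_m ρ(z,r) K'_m† = ∑_n K_n ρ(z,r) K_n†. In particular, the set of qubit states reachable from ρ(z,r) by incoherent operations equals the set reachable by strictly incoherent operations. -/

import Mathlib

open Matrix

/-- A 2×2 complex matrix is incoherent if each of its columns has at most one
nonzero entry. -/
def Incoherent (K : Matrix (Fin 2) (Fin 2) ℂ) : Prop :=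
  ∀ j i i' : Fin 2, K i j ≠ 0 → K i' j ≠ 0 → i = i'

/-- A 2×2 complex matrix is strictly incoherent if each of its columns and each of
its rows has at most one nonzero entry. -/
def StrictlyIncoherent (K : Matrix (Fin 2) (Fin 2) ℂ) : Prop :=
  Incoherent K ∧ ∀ i j j' : Fin 2, K i j ≠ 0 → K i j' ≠ 0 → j = j'

/-- The qubit state `ρ(z,r) = (1/2) [[1+z, r], [r, 1-z]]`. -/
noncomputable def qubit (z r : ℝ) : Matrix (Fin 2) (Fin 2) ℂ :=
  (1 / 2 : ℂ) • !![1 + (z : ℂ), (r : ℂ); (r : ℂ), 1 - (z : ℂ)]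

/-- `σ` is reachable from `ρ` by an incoherent operation. -/
def IOReachable (ρ σ : Matrix (Fin 2) (Fin 2) ℂ) : Prop :=
  ∃ (n : ℕ) (K : Fin n → Matrix (Fin 2) (Fin 2) ℂ),
    (∀ i, Incoherent (K i)) ∧ (∑ i, (K i)ᴴ * K i = 1) ∧ (∑ i, K i * ρ * (K i)ᴴ = σ)

/-- `σ` is reachable from `ρ` by a strictly incoherent operation. -/
def SIOReachable (ρ σ : Matrix (Fin 2) (Fin 2) ℂ) : Prop :=
  ∃ (n : ℕ) (K : Fin n → Matrix (Fin 2) (Fin 2) ℂ),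
    (∀ i, StrictlyIncoherent (K i)) ∧ (∑ i, (K i)ᴴ * K i = 1) ∧
      (∑ i, K i * ρ * (K i)ᴴ = σ)

section IOSIOHelpers
open ComplexOrder

-- zero is SIO
lemma sio_zero : StrictlyIncoherent 0 := by
  constructor
  · intro j i i' h; simp [Matrix.zero_apply] at h
  · intro i j j' h; simp [Matrix.zero_apply] at h

-- single entry matrices are SIO
lemma sio_single (p q : Fin 2) (c : ℂ) :
    StrictlyIncoherent (Matrix.of fun i j => if i = p ∧ j = q then c else 0) := by
  constructor
  · intro j i i' h h'
    simp only [Matrix.of_apply, ne_eq, ite_eq_right_iff, not_forall] at h h'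
    rw [h.1.1, h'.1.1]
  · intro i j j' h h'
    simp only [Matrix.of_apply, ne_eq, ite_eq_right_iff, not_forall] at h h'
    rw [h.1.2, h'.1.2]

-- bad row structure
lemma bad_row {K : Matrix (Fin 2) (Fin 2) ℂ} (hK : Incoherent K)
    (hns : ¬ StrictlyIncoherent K) :
    (∀ j, K 1 j = 0) ∨ (∀ j, K 0 j = 0) := by
  simp only [StrictlyIncoherent, not_and, not_forall] at hns
  obtain ⟨i, j, j', h1, h2, hjj⟩ := hns hK
  have hj : j ≠ j' := hjj
  -- row i has two nonzero entries, so for i' ≠ i both columns vanish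
  have hcol : ∀ j₀ i', i' ≠ i → K i' j₀ = 0 := by
    intro j₀ i' hne
    by_contra h
    have fin2 : ∀ k : Fin 2, k = 0 ∨ k = 1 := by decide
    rcases fin2  j₀ with rfl | rfl
    · rcases fin2  j with rfl | rfl
      · exact hne (hK 0 i' i h h1)
      · rcases fin2  j' with rfl | rfl
        · exact hne (hK 0 i' i h h2)
        · exact hj rfl
    · rcases fin2  j with rfl | rfl
      · rcases fin2  j' with rfl | rfl
        · exact hj rfl
        · exact hne (hK 1 i' i h h2)
      · exact hne (hK 1 i' i h h1)
  have fin2 : ∀ k : Fin 2, k = 0 ∨ k = 1 := by decide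
  rcases fin2 i with rfl | rfl
  · exact Or.inl fun j₀ => hcol j₀ 1 (by decide)
  · exact Or.inr fun j₀ => hcol j₀ 0 (by decide)

-- qubit is PosSemidef
lemma qubit_psd {z r : ℝ} (hzr : z ^ 2 + r ^ 2 ≤ 1) : (qubit z r).PosSemidef := by
  refine Matrix.posSemidef_iff_dotProduct_mulVec.mpr ⟨?_, ?_⟩
  · ext i j
    fin_cases i <;> fin_cases j <;>
      simp [qubit, Matrix.conjTranspose_apply, Complex.ext_iff]
  · intro x
    set a := (x 0).re with ha; set b := (x 0).im with hb
    set c := (x 1).re with hc; set d := (x 1).im with hd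
    have key : star x ⬝ᵥ qubit z r *ᵥ x =
        ((((1+z) * (a^2 + b^2) + (1-z) * (c^2 + d^2) + 2*r*(a*c + b*d)) / 2 : ℝ) : ℂ) := by
      apply Complex.ext
      · simp [qubit, dotProduct, Matrix.mulVec, Fin.sum_univ_two, Complex.add_re,
          Complex.mul_re, Complex.mul_im, ha, hb, hc, hd, ← Complex.ofReal_pow]
        ring
      · simp [qubit, dotProduct, Matrix.mulVec, Fin.sum_univ_two, Complex.add_im,
          Complex.mul_re, Complex.mul_im, ha, hb, hc, hd, ← Complex.ofReal_pow]
        ring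
    rw [key, Complex.zero_le_real]
    have hz1 : z^2 ≤ 1 := by nlinarith [sq_nonneg r]
    have hXY : (a*c + b*d)^2 ≤ (a^2+b^2) * (c^2+d^2) := by nlinarith [sq_nonneg (a*d - b*c)]
    have hzl : -1 ≤ z := by nlinarith
    have hzu : z ≤ 1 := by nlinarith
    have hS : 0 ≤ (1+z) * (a^2+b^2) + (1-z) * (c^2+d^2) :=
      add_nonneg (mul_nonneg (by linarith) (by positivity))
        (mul_nonneg (by linarith) (by positivity))
    have habs : (2*r*(a*c+b*d))^2 ≤ ((1+z)*(a^2+b^2) + (1-z)*(c^2+d^2))^2 := by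
      nlinarith [sq_nonneg ((1+z)*(a^2+b^2) - (1-z)*(c^2+d^2)),
        mul_nonneg (sq_nonneg r) (sub_nonneg.mpr hXY),
        mul_nonneg (by nlinarith : (0:ℝ) ≤ 1 - z^2 - r^2)
          (mul_nonneg (by positivity : (0:ℝ) ≤ a^2+b^2) (by positivity : (0:ℝ) ≤ c^2+d^2))]
    nlinarith [habs, hS]

-- single-entry matrix with a sqrt entry
noncomputable def sg (p q : Fin 2) (x : ℝ) : Matrix (Fin 2) (Fin 2) ℂ :=
  Matrix.of fun i j => if i = p ∧ j = q then ((Real.sqrt x : ℝ) : ℂ) else 0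

lemma sio_sg (p q : Fin 2) (x : ℝ) : StrictlyIncoherent (sg p q x) := sio_single p q _

lemma psd_diag {M : Matrix (Fin 2) (Fin 2) ℂ} (hM : M.PosSemidef) (j : Fin 2) :
    M j j = ((M j j).re : ℂ) ∧ 0 ≤ (M j j).re := by
  have h := hM.dotProduct_mulVec_nonneg (Pi.single j 1)
  have he : star (Pi.single j 1 : Fin 2 → ℂ) ⬝ᵥ M *ᵥ Pi.single j 1 = M j j := by
    fin_cases j <;>
      simp [dotProduct, Matrix.mulVec, Fin.sum_univ_two, Pi.single_apply]
  rw [he, Complex.le_def] at h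
  simp only [Complex.zero_re, Complex.zero_im] at h
  exact ⟨(Complex.ext (by simp) (by simp [← h.2])), h.1⟩

theorem key_construction (n : ℕ) (K : Fin n → Matrix (Fin 2) (Fin 2) ℂ)
    (hinc : ∀ i, Incoherent (K i)) (hsum : ∑ i, (K i)ᴴ * K i = 1)
    (z r : ℝ) (hzr : z ^ 2 + r ^ 2 ≤ 1) :
    ∃ (m : ℕ) (K' : Fin m → Matrix (Fin 2) (Fin 2) ℂ),
      (∀ i, StrictlyIncoherent (K' i)) ∧ (∑ i, (K' i)ᴴ * K' i = 1) ∧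
      ∑ i, K' i * qubit z r * (K' i)ᴴ = ∑ i, K i * qubit z r * (K i)ᴴ := by
  classical
  set ρ := qubit z r with hρdef
  have hρpsd : ρ.PosSemidef := qubit_psd hzr
  set p : Fin n → Prop := fun i => StrictlyIncoherent (K i) with hp
  set G := ∑ i ∈ Finset.univ.filter p, (K i)ᴴ * K i with hG
  set T := ∑ i ∈ Finset.univ.filter (fun i => ¬ p i), (K i)ᴴ * K i with hT
  set Q := ∑ i ∈ Finset.univ.filter p, K i * ρ * (K i)ᴴ with hQ
  set P := ∑ i ∈ Finset.univ.filter (fun i => ¬ p i), K i * ρ * (K i)ᴴ with hP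
  have hGT : G + T = 1 := by
    rw [hG, hT, Finset.sum_filter_add_sum_filter_not, hsum]
  have hQP : Q + P = ∑ i, K i * ρ * (K i)ᴴ := by
    rw [hQ, hP, Finset.sum_filter_add_sum_filter_not]
  -- positivity
  have hTpsd : T.PosSemidef :=
    Finset.sum_induction _ _ (fun a b ha hb => ha.add hb)
      (Matrix.PosSemidef.zero) (fun i _ => Matrix.posSemidef_conjTranspose_mul_self _)
  have hPpsd : P.PosSemidef :=
    Finset.sum_induction _ _ (fun a b ha hb => ha.add hb)
      (Matrix.PosSemidef.zero) (fun i _ => hρpsd.mul_mul_conjTranspose_same _)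
  -- off-diagonal vanishing for good terms
  have hGod : ∀ a b : Fin 2, a ≠ b → G a b = 0 := by
    intro a b hab
    rw [hG, Matrix.sum_apply]
    refine Finset.sum_eq_zero fun i hi => ?_
    have hsio : StrictlyIncoherent (K i) := (Finset.mem_filter.mp hi).2
    have t0 : (starRingEnd ℂ) (K i 0 a) * K i 0 b = 0 := by
      by_cases h : K i 0 b = 0
      · simp [h]
      · have h2 : K i 0 a = 0 := by
          by_contra hc; exact hab (hsio.2 0 a b hc h)
        simp [h2]
    have t1 : (starRingEnd ℂ) (K i 1 a) * K i 1 b = 0 := by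
      by_cases h : K i 1 b = 0
      · simp [h]
      · have h2 : K i 1 a = 0 := by
          by_contra hc; exact hab (hsio.2 1 a b hc h)
        simp [h2]
    simp [Matrix.mul_apply, Fin.sum_univ_two, Matrix.conjTranspose_apply, t0, t1]
  have hTod : ∀ a b : Fin 2, a ≠ b → T a b = 0 := by
    intro a b hab
    have h1 : G a b + T a b = (1 : Matrix (Fin 2) (Fin 2) ℂ) a b := by
      rw [← Matrix.add_apply, hGT]
    rw [hGod a b hab, Matrix.one_apply_ne hab] at h1
    linear_combination h1
  have hPod : ∀ a b : Fin 2, a ≠ b → P a b = 0 := by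
    intro a b hab
    rw [hP, Matrix.sum_apply]
    refine Finset.sum_eq_zero fun i hi => ?_
    have hbad : ¬ StrictlyIncoherent (K i) := (Finset.mem_filter.mp hi).2
    rcases bad_row (hinc i) hbad with h1 | h0
    · fin_cases a <;> fin_cases b <;> first
      | exact absurd rfl hab
      | simp [Matrix.mul_apply, Fin.sum_univ_two, Matrix.conjTranspose_apply, h1 0, h1 1]
    · fin_cases a <;> fin_cases b <;> first
      | exact absurd rfl hab
      | simp [Matrix.mul_apply, Fin.sum_univ_two, Matrix.conjTranspose_apply, h0 0, h0 1]
  -- trace identity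
  have htr : P 0 0 + P 1 1 = T 0 0 * ρ 0 0 + T 1 1 * ρ 1 1 := by
    have h1 : Matrix.trace P = Matrix.trace (T * ρ) := by
      rw [hP, hT, Matrix.trace_sum, Finset.sum_mul, Matrix.trace_sum]
      refine Finset.sum_congr rfl fun i _ => ?_
      rw [mul_assoc, Matrix.trace_mul_comm, mul_assoc, Matrix.trace_mul_comm]
    rw [Matrix.trace_fin_two, Matrix.trace_fin_two] at h1
    rw [h1, Matrix.mul_apply, Matrix.mul_apply, Fin.sum_univ_two, Fin.sum_univ_two,
      hTod 0 1 (by decide), hTod 1 0 (by decide)]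
    ring
  -- scalars
  have hT00 := psd_diag hTpsd 0
  have hT11 := psd_diag hTpsd 1
  have hP00 := psd_diag hPpsd 0
  have hP11 := psd_diag hPpsd 1
  set m0 := (T 0 0).re with hm0
  set m1 := (T 1 1).re with hm1
  set p0 := (P 0 0).re with hp0
  set p1 := (P 1 1).re with hp1
  have hρ00 : ρ 0 0 = (((1+z)/2 : ℝ) : ℂ) := by
    simp [hρdef, qubit]
    ring
  have hρ11 : ρ 1 1 = (((1-z)/2 : ℝ) : ℂ) := by
    simp [hρdef, qubit]
    ring
  set r0 : ℝ := (1+z)/2 with hr0def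
  set r1 : ℝ := (1-z)/2 with hr1def
  have hzl : -1 ≤ z := by nlinarith [sq_nonneg r]
  have hzu : z ≤ 1 := by nlinarith [sq_nonneg r]
  have hr0 : 0 ≤ r0 := by rw [hr0def]; linarith
  have hr1 : 0 ≤ r1 := by rw [hr1def]; linarith
  have htrR : p0 + p1 = m0 * r0 + m1 * r1 := by
    have h := htr
    rw [hT00.1, hT11.1, hP00.1, hP11.1, hρ00, hρ11] at h
    exact_mod_cast h
  set tot := m0 * r0 + m1 * r1 with htotdef
  have htotnn : 0 ≤ tot := by
    have := hT00.2; have := hT11.2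
    rw [htotdef]
    exact add_nonneg (mul_nonneg hT00.2 hr0) (mul_nonneg hT11.2 hr1)
  have hp0le : p0 ≤ tot := by linarith [hP11.2]
  set t := if tot = 0 then 0 else p0 / tot with ht
  have ht0 : 0 ≤ t := by
    rw [ht]; split_ifs with h
    · exact le_rfl
    · exact div_nonneg hP00.2 htotnn
  have ht1 : t ≤ 1 := by
    rw [ht]; split_ifs with h
    · norm_num
    · exact (div_le_one (lt_of_le_of_ne htotnn (Ne.symm h))).mpr hp0le
  have httot : t * tot = p0 := by
    rw [ht]; split_ifs with h
    · rw [h]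
      have : p0 = 0 := by
        have := hP00.2; have := hP11.2
        rw [h] at htrR
        linarith
      simp [this]
    · exact div_mul_cancel₀ p0 h
  obtain ⟨α, hαdef⟩ : ∃ a : ℝ, a = t * m0 := ⟨_, rfl⟩
  obtain ⟨β, hβdef⟩ : ∃ a : ℝ, a = t * m1 := ⟨_, rfl⟩
  obtain ⟨γ, hγdef⟩ : ∃ a : ℝ, a = (1-t) * m0 := ⟨_, rfl⟩
  obtain ⟨δ, hδdef⟩ : ∃ a : ℝ, a = (1-t) * m1 := ⟨_, rfl⟩
  have hαnn : 0 ≤ α := hαdef ▸ mul_nonneg ht0 hT00.2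
  have hβnn : 0 ≤ β := hβdef ▸ mul_nonneg ht0 hT11.2
  have hγnn : 0 ≤ γ := hγdef ▸ mul_nonneg (by linarith) hT00.2
  have hδnn : 0 ≤ δ := hδdef ▸ mul_nonneg (by linarith) hT11.2
  have hαγ : α + γ = m0 := by rw [hαdef, hγdef]; ring
  have hβδ : β + δ = m1 := by rw [hβdef, hδdef]; ring
  have hout0 : α * r0 + β * r1 = p0 := by
    rw [← httot, hαdef, hβdef, htotdef]; ring
  have hout1 : γ * r0 + δ * r1 = p1 := by
    have h : γ * r0 + δ * r1 = tot - t * tot := by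
      rw [hγdef, hδdef, htotdef]; ring
    rw [h, httot]; linarith
  -- the four extra Kraus operators
  set L : Fin 4 → Matrix (Fin 2) (Fin 2) ℂ := ![sg 0 0 α, sg 0 1 β, sg 1 0 γ, sg 1 1 δ]
    with hL
  have hfourT : ∑ i : Fin 4, (L i)ᴴ * L i = T := by
    have hTmat : T = !![((m0 : ℝ) : ℂ), 0; 0, ((m1 : ℝ) : ℂ)] := by
      rw [Matrix.eta_fin_two T, hT00.1, hT11.1, hTod 0 1 (by decide), hTod 1 0 (by decide)]
    rw [Fin.sum_univ_four, hTmat]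
    simp only [hL]
    ext a b
    fin_cases a <;> fin_cases b <;>
      simp [sg, Matrix.mul_apply, Matrix.conjTranspose_apply, Fin.sum_univ_two,
        Complex.conj_ofReal, ← Complex.ofReal_mul, Real.mul_self_sqrt, hαnn, hβnn,
        hγnn, hδnn, ← Complex.ofReal_add, hαγ, hβδ]
  have hfourP : ∑ i : Fin 4, L i * ρ * (L i)ᴴ = P := by
    have hPmat : P = !![((p0 : ℝ) : ℂ), 0; 0, ((p1 : ℝ) : ℂ)] := by
      rw [Matrix.eta_fin_two P, hP00.1, hP11.1, hPod 0 1 (by decide), hPod 1 0 (by decide)]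
    rw [Fin.sum_univ_four, hPmat]
    simp only [hL]
    ext a b
    fin_cases a <;> fin_cases b <;>
      simp [sg, Matrix.mul_apply, Matrix.conjTranspose_apply, Fin.sum_univ_two,
        Complex.conj_ofReal, hρ00, hρ11, ← Complex.ofReal_mul, Real.mul_self_sqrt,
        hαnn, hβnn, hγnn, hδnn, ← Complex.ofReal_add, ← hout0, ← hout1,
        Real.sq_sqrt hαnn, Real.sq_sqrt hβnn, Real.sq_sqrt hγnn, Real.sq_sqrt hδnn]
    · linear_combination r0 * Real.mul_self_sqrt hαnn + r1 * Real.mul_self_sqrt hβnn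
    · linear_combination r0 * Real.mul_self_sqrt hγnn + r1 * Real.mul_self_sqrt hδnn
  -- assemble
  refine ⟨n + 4, Fin.append (fun i => if p i then K i else 0) L, ?_, ?_, ?_⟩
  · intro i
    refine Fin.addCases (fun i => ?_) (fun i => ?_) i
    · rw [Fin.append_left]
      split_ifs with h
      · exact h
      · exact sio_zero
    · rw [Fin.append_right]
      fin_cases i <;> simp only [hL] <;> exact sio_sg _ _ _
  · rw [Fin.sum_univ_add]
    simp only [Fin.append_left, Fin.append_right]
    have h1 : ∀ i : Fin n,
        (if p i then K i else 0)ᴴ * (if p i then K i else 0) =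
          if p i then (K i)ᴴ * K i else 0 := by
      intro i; split_ifs <;> simp
    rw [Finset.sum_congr rfl (fun i _ => h1 i), ← Finset.sum_filter, ← hG, hfourT, hGT]
  · rw [Fin.sum_univ_add]
    simp only [Fin.append_left, Fin.append_right]
    have h1 : ∀ i : Fin n,
        (if p i then K i else 0) * ρ * (if p i then K i else 0)ᴴ =
          if p i then K i * ρ * (K i)ᴴ else 0 := by
      intro i; split_ifs <;> simp
    rw [Finset.sum_congr rfl (fun i _ => h1 i), ← Finset.sum_filter, ← hQ, hfourP, hQP]


end IOSIOHelpers

/-- Theorem 1: every incoherent operation acting on a fixed qubit state can be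
replaced by a strictly incoherent operation with the same output; consequently the
IO- and SIO-transformation regions of any qubit state coincide. -/
theorem io_eq_sio_on_qubit (n : ℕ) (K : Fin n → Matrix (Fin 2) (Fin 2) ℂ)
    (hinc : ∀ i, Incoherent (K i)) (hsum : ∑ i, (K i)ᴴ * K i = 1)
    (z r : ℝ) (hzr : z ^ 2 + r ^ 2 ≤ 1) :
    (∃ (m : ℕ) (K' : Fin m → Matrix (Fin 2) (Fin 2) ℂ),
      (∀ i, StrictlyIncoherent (K' i)) ∧ (∑ i, (K' i)ᴴ * K' i = 1) ∧
      ∑ i, K' i * qubit z r * (K' i)ᴴ = ∑ i, K i * qubit z r * (K i)ᴴ) ∧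
    {σ | IOReachable (qubit z r) σ} = {σ | SIOReachable (qubit z r) σ} := by
  refine ⟨key_construction n K hinc hsum z r hzr, ?_⟩
  ext σ
  simp only [Set.mem_setOf_eq]
  constructor
  · rintro ⟨m, K', hK'inc, hK'sum, hK'out⟩
    obtain ⟨m', K'', h1, h2, h3⟩ := key_construction m K' hK'inc hK'sum z r hzr
    exact ⟨m', K'', h1, h2, h3.trans hK'out⟩
  · rintro ⟨m, K', h1, h2, h3⟩
    exact ⟨m, K', fun i => (h1 i).1, h2, h3⟩
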